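/- arXiv:2009.00200 — 2 statements merged into one kernel-verified Lean document; each statement's English description precedes it below -/
import Mathlib

section
/- (Weak augmentation suffices on modular lattices) Let L be a finite modular lattice and I ⊆ L a nonempty order ideal. If for all I₁ ∈ I and all maximal I₂ ∈ I with |I₁| < |I₂| there exists J ∈ I with I₁ < J ≤ I₁ ∨ I₂, then the same augmentation property holds for all pairs I₁, I₂ ∈ I with |I₁| < |I₂|. -/
/-- The height of an element: length of a maximal chain from the bottom. -/
noncomputable def ht {α : Type*} [Preorder α] (x : α) : ℕ := (Order.height x).toNat

section Aux

variable {α : Type*} [Lattice α] [Fintype α]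

lemma height_ne_top (x : α) : Order.height x ≠ ⊤ := by
  have h : Order.height x ≤ (Fintype.card α : ℕ∞) := by
    apply Order.height_le
    intro p _
    have hinj : Function.Injective p.toFun := p.strictMono.injective
    have := Fintype.card_le_of_injective _ hinj
    simp only [Fintype.card_fin] at this
    exact_mod_cast Nat.le_of_succ_le this
  exact fun htop => by simp [htop] at h

lemma ht_le_ht {x y : α} (h : x ≤ y) : ht x ≤ ht y :=
  ENat.toNat_le_toNat (Order.height_mono h) (height_ne_top y)

lemma ht_lt_ht {x y : α} (h : x < y) : ht x < ht y := by
  have := Order.height_strictMono h (Ne.lt_top (height_ne_top x))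
  have hx := ENat.coe_toNat (height_ne_top x)
  have hy := ENat.coe_toNat (height_ne_top y)
  rw [← hx, ← hy] at this
  exact_mod_cast this

lemma exists_le_covBy {x b : α} (h : x < b) : ∃ c, x ≤ c ∧ c ⋖ b := by
  obtain ⟨c, hc, hmax⟩ := Set.Finite.exists_maximalFor id {y | x ≤ y ∧ y < b}
    (Set.toFinite _) ⟨x, le_rfl, h⟩
  refine ⟨c, hc.1, hc.2, fun z hcz hzb => ?_⟩
  have hz : z ∈ {y | x ≤ y ∧ y < b} := ⟨hc.1.trans hcz.le, hzb⟩
  exact lt_irrefl _ (hcz.trans_le (hmax hz hcz.le))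

lemma exists_covBy_le {x b : α} (h : x < b) : ∃ c, x ⋖ c ∧ c ≤ b := by
  obtain ⟨c, hc, hmin⟩ := Set.Finite.exists_minimalFor id {y | x < y ∧ y ≤ b}
    (Set.toFinite _) ⟨b, h, le_rfl⟩
  refine ⟨c, ⟨hc.1, fun z hxz hzc => ?_⟩, hc.2⟩
  have hz : z ∈ {y | x < y ∧ y ≤ b} := ⟨hxz, hzc.le.trans hc.2⟩
  exact lt_irrefl _ (hzc.trans_le (hmin hz hzc.le))

lemma exists_covBy_ht {a b : α} (hab : a < b) : ∃ c, c ⋖ b ∧ ht b = ht c + 1 := by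
  obtain ⟨y, hy, hmax⟩ := Set.Finite.exists_maximalFor ht {y : α | y < b}
    (Set.toFinite _) ⟨a, hab⟩
  have hymax : ∀ z : α, z < b → ht z ≤ ht y := by
    intro z hz
    by_contra hlt
    push_neg at hlt
    exact absurd (hmax hz hlt.le) (by omega)
  -- bound: height b ≤ ht y + 1
  have hb : Order.height b ≤ ((ht y + 1 : ℕ) : ℕ∞) := by
    rw [Order.height_le_coe_iff]
    intro z hz
    have h1 : Order.height z = ((ht z : ℕ) : ℕ∞) := (ENat.coe_toNat (height_ne_top z)).symm
    rw [h1]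
    exact_mod_cast Nat.lt_succ_of_le (hymax z hz)
  have hbN : ht b ≤ ht y + 1 := by
    have := ENat.toNat_le_toNat hb (by exact_mod_cast ENat.coe_ne_top (ht y + 1))
    rw [ENat.toNat_coe] at this
    exact this
  obtain ⟨c, hyc, hcb⟩ := exists_le_covBy hy
  have h1 : ht y ≤ ht c := ht_le_ht hyc
  have h2 : ht c < ht b := ht_lt_ht hcb.lt
  exact ⟨c, hcb, by omega⟩

variable [IsModularLattice α]

private lemma ht_covBy_aux : ∀ n : ℕ, ∀ a b : α, ht b ≤ n → a ⋖ b → ht b = ht a + 1 := by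
  intro n
  induction n with
  | zero =>
    intro a b hb hab
    have := ht_lt_ht hab.lt
    omega
  | succ n IH =>
    intro a b hb hab
    obtain ⟨c, hcb, hbc⟩ := exists_covBy_ht hab.lt
    by_cases hac : a = c
    · rw [hac]; omega
    · have hca : ¬ c ≤ a := by
        intro hle
        have : c < a := hle.lt_of_ne (fun h => hac h.symm)
        exact hcb.2 this hab.lt
      have h1 : a < a ⊔ c := left_lt_sup.2 hca
      have h2 : a ⊔ c ≤ b := sup_le hab.le hcb.le
      have hsup : a ⊔ c = b := by
        rcases h2.lt_or_eq with h | h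
        · exact absurd h (hab.2 h1)
        · exact h
      have h3 : a ⊓ c ⋖ c := inf_covBy_of_covBy_sup_left (by rwa [hsup])
      have h4 : a ⊓ c < a := by
        refine inf_le_left.lt_of_ne (fun he => ?_)
        have hac' : a ≤ c := by rw [← he]; exact inf_le_right
        exact hab.2 (hac'.lt_of_ne hac) hcb.lt
      have h5 : ht c = ht (a ⊓ c) + 1 := IH (a ⊓ c) c (by omega) h3
      have h6 := ht_lt_ht h4
      have h7 := ht_lt_ht hab.lt
      omega

lemma ht_covBy {a b : α} (hab : a ⋖ b) : ht b = ht a + 1 :=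
  ht_covBy_aux (ht b) a b le_rfl hab

private lemma ht_modular_aux :
    ∀ n : ℕ, ∀ x y : α, ht y - ht (x ⊓ y) ≤ n →
      ht (x ⊔ y) + ht (x ⊓ y) = ht x + ht y := by
  intro n
  induction n with
  | zero =>
    intro x y h
    have heq : x ⊓ y = y := by
      rcases (inf_le_right : x ⊓ y ≤ y).lt_or_eq with h' | h'
      · have := ht_lt_ht h'; omega
      · exact h'
    rw [sup_eq_left.2 (inf_eq_right.1 heq), heq]
  | succ n IH =>
    intro x y h
    by_cases hyx : y ≤ x
    · rw [sup_eq_left.2 hyx, inf_eq_right.2 hyx]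
    · have hlt : x ⊓ y < y := inf_le_right.lt_of_ne (fun he => hyx (inf_eq_right.1 he))
      obtain ⟨c, hcov, hcy⟩ := exists_covBy_le hlt
      have hxc : x ⊓ c = x ⊓ y :=
        le_antisymm (inf_le_inf_left x hcy) (le_inf inf_le_left hcov.le)
      have hcovc : x ⋖ x ⊔ c := by
        have h5 : c ⊓ x ⋖ c := by rwa [inf_comm, hxc]
        have := covBy_sup_of_inf_covBy_left h5
        rwa [sup_comm] at this
      have h6 : (x ⊔ c) ⊓ y = c := by
        rw [sup_comm, sup_inf_assoc_of_le x hcy, sup_eq_left.2 hcov.le]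
      have h7 : (x ⊔ c) ⊔ y = x ⊔ y := by
        rw [sup_assoc, sup_eq_right.2 hcy]
      have e1 := ht_covBy hcovc
      have e2 := ht_covBy hcov
      have hm : ht y - ht ((x ⊔ c) ⊓ y) ≤ n := by rw [h6]; omega
      have := IH (x ⊔ c) y hm
      rw [h7, h6] at this
      omega

lemma ht_modular (x y : α) : ht (x ⊔ y) + ht (x ⊓ y) = ht x + ht y :=
  ht_modular_aux (ht y - ht (x ⊓ y)) x y le_rfl

lemma exists_le_maximal_mem {S : Set α} {x : α} (hx : x ∈ S) :
    ∃ m, x ≤ m ∧ Maximal (· ∈ S) m := by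
  obtain ⟨m, hm, hmax⟩ := Set.Finite.exists_maximalFor id {y ∈ S | x ≤ y}
    (Set.toFinite _) ⟨x, hx, le_rfl⟩
  refine ⟨m, hm.2, hm.1, fun z hz hmz => ?_⟩
  have : z ∈ {y ∈ S | x ≤ y} := ⟨hz, hm.2.trans hmz⟩
  exact hmax this hmz

end Aux

/-- On a finite modular lattice, weak augmentation (against maximal independent sets)
implies full augmentation. -/
theorem weak_augmentation_implies_augmentation {α : Type*} [Lattice α] [Fintype α]
    [BoundedOrder α] [IsModularLattice α]
    (𝓘 : Set α) (hne : 𝓘.Nonempty) (hideal : IsLowerSet 𝓘)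
    (hweak : ∀ I₁ I₂, I₁ ∈ 𝓘 → Maximal (· ∈ 𝓘) I₂ → ht I₁ < ht I₂ →
        ∃ J ∈ 𝓘, I₁ < J ∧ J ≤ I₁ ⊔ I₂) :
    ∀ I₁ I₂, I₁ ∈ 𝓘 → I₂ ∈ 𝓘 → ht I₁ < ht I₂ →
        ∃ J ∈ 𝓘, I₁ < J ∧ J ≤ I₁ ⊔ I₂ := by
  -- every element of 𝓘 has height at most that of any maximal element
  have hmaxht : ∀ M, Maximal (· ∈ 𝓘) M → ∀ K, K ∈ 𝓘 → ht K ≤ ht M := by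
    intro M hM K hK
    by_contra hcon
    push_neg at hcon
    obtain ⟨M'', hKM'', hM''⟩ := exists_le_maximal_mem hK
    have hlt : ht M < ht M'' := lt_of_lt_of_le hcon (ht_le_ht hKM'')
    obtain ⟨J, hJ, hMJ, _⟩ := hweak M M'' hM.1 hM'' hlt
    exact lt_irrefl _ (hMJ.trans_le (hM.2 hJ hMJ.le))
  -- any element of 𝓘 extends to a maximal element within its join with a maximal element
  have growB : ∀ n : ℕ, ∀ I, I ∈ 𝓘 → ∀ M, Maximal (· ∈ 𝓘) M → ht M - ht I ≤ n →
      ∃ M₁, Maximal (· ∈ 𝓘) M₁ ∧ I ≤ M₁ ∧ M₁ ≤ I ⊔ M := by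
    intro n
    induction n with
    | zero =>
      intro I hI M hM h
      have hIM : ht M ≤ ht I := by omega
      refine ⟨I, ⟨hI, fun z hz hIz => ?_⟩, le_rfl, le_sup_left⟩
      rcases hIz.lt_or_eq with h' | h'
      · have h1 := ht_lt_ht h'
        have h2 := hmaxht M hM z hz
        omega
      · exact h'.ge
    | succ n IH =>
      intro I hI M hM h
      by_cases hIM : ht I < ht M
      · obtain ⟨J, hJ, hIJ, hJle⟩ := hweak I M hI hM hIM
        have hJht := ht_lt_ht hIJ
        have hJM : ht J ≤ ht M := hmaxht M hM J hJ
        obtain ⟨M₁, hM₁, hJM₁, hM₁le⟩ := IH J hJ M hM (by omega)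
        exact ⟨M₁, hM₁, hIJ.le.trans hJM₁, hM₁le.trans (sup_le hJle le_sup_right)⟩
      · push_neg at hIM
        refine ⟨I, ⟨hI, fun z hz hIz => ?_⟩, le_rfl, le_sup_left⟩
        rcases hIz.lt_or_eq with h' | h'
        · have h1 := ht_lt_ht h'
          have h2 := hmaxht M hM z hz
          omega
        · exact h'.ge
  intro I₁ I₂ h1 h2 hlt
  obtain ⟨M, hI₂M, hM⟩ := exists_le_maximal_mem h2
  obtain ⟨M₁, hM₁, hI₁M₁, hM₁le⟩ :=
    growB (ht M - ht I₁) I₁ h1 M hM le_rfl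
  refine ⟨(I₁ ⊔ I₂) ⊓ M₁, hideal inf_le_right hM₁.1, ?_, inf_le_left⟩
  have e1 := ht_modular (I₁ ⊔ I₂) M₁
  have e2 := ht_modular I₁ I₂
  have e3 := ht_modular I₁ M
  have i1 : ht ((I₁ ⊔ I₂) ⊔ M₁) ≤ ht (I₁ ⊔ M) :=
    ht_le_ht (sup_le (sup_le le_sup_left (hI₂M.trans le_sup_right)) hM₁le)
  have i2 : ht (I₁ ⊓ I₂) ≤ ht (I₁ ⊓ M) := ht_le_ht (inf_le_inf_left I₁ hI₂M)
  have i3 : ht M₁ = ht M :=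
    le_antisymm (hmaxht M hM M₁ hM₁.1) (hmaxht M₁ hM₁ M hM.1)
  have hJht : ht I₂ ≤ ht ((I₁ ⊔ I₂) ⊓ M₁) := by omega
  have hle : I₁ ≤ (I₁ ⊔ I₂) ⊓ M₁ := le_inf le_sup_left hI₁M₁
  refine hle.lt_of_ne (fun he => ?_)
  rw [← he] at hJht
  omega
end

section
/- (All bases have the same height) Let L be a finite lower semimodular lattice and B ⊆ L a family satisfying: (B1) the elements of B are pairwise incomparable, and (B2) for all B₁, B₂ ∈ B and X, Y ∈ L with X ≤ B₁ and B₂ ≤ Y, there exists B ∈ B with X ≤ B ≤ Y. Then all elements of B have the same height. -/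
lemma htfin {α : Type*} [Preorder α] [Fintype α] (x : α) : Order.height x ≠ ⊤ := by
  have h : Order.height x ≤ (Fintype.card α : ℕ∞) :=
    Order.height_le fun p _ => by exact_mod_cast p.length_lt_card.le
  exact ne_top_of_le_ne_top (ENat.coe_lt_top _).ne h

lemma ht_mono {α : Type*} [Preorder α] [Fintype α] {a b : α} (h : a ≤ b) : ht a ≤ ht b :=
  ENat.toNat_le_toNat (Order.height_mono h) (htfin b)

lemma ht_lt {α : Type*} [Preorder α] [Fintype α] {a b : α} (h : a < b) : ht a < ht b := by
  have h2 := Order.height_strictMono h ((htfin a).lt_top)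
  rw [← ENat.coe_toNat (htfin a), ← ENat.coe_toNat (htfin b)] at h2
  exact_mod_cast h2

/-- Jordan–Dedekind: in a finite lower semimodular lattice, a cover raises height by 1. -/
lemma ht_covBy_s8 {α : Type*} [Lattice α] [Fintype α]
    (hLSM : ∀ X Y : α, X ⋖ X ⊔ Y → X ⊓ Y ⋖ Y) :
    ∀ {a b : α}, a ⋖ b → ht b = ht a + 1 := by
  suffices H : ∀ n : ℕ, ∀ a b : α, a ⋖ b → ht b = n → ht b = ht a + 1 by
    intro a b h; exact H _ a b h rfl
  intro n
  induction n using Nat.strong_induction_on with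
  | _ n IH =>
    intro a b hab hn
    have h1 : ht a + 1 ≤ ht b := ht_lt hab.lt
    have h2 : ht b ≤ ht a + 1 := by
      have key : Order.height b ≤ ((ht a + 1 : ℕ) : ℕ∞) := by
        rw [Order.height_le_coe_iff]
        intro y hy
        have hyle : ht y ≤ ht a := by
          by_cases hya : y ≤ a
          · exact ht_mono hya
          · have hlt : a < a ⊔ y := lt_of_le_of_ne le_sup_left
              (fun h => hya (h ▸ le_sup_right))
            have hsup : a ⊔ y = b := by
              rcases (sup_le hab.lt.le hy.le).lt_or_eq with h | h
              · exact absurd h (hab.2 hlt)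
              · exact h
            have hcov : a ⊓ y ⋖ y := hLSM a y (by rw [hsup]; exact hab)
            have hlt2 : ht y < n := hn ▸ ht_lt hy
            have heq := IH (ht y) hlt2 (a ⊓ y) y hcov rfl
            have hinf : a ⊓ y < a := by
              refine lt_of_le_of_ne inf_le_left (fun h => ?_)
              have hay : a ≤ y := h ▸ inf_le_right
              rcases hay.lt_or_eq with h' | h'
              · exact hab.2 h' hy
              · exact hya h'.ge
            have := ht_lt hinf; omega
        calc Order.height y ≤ ((ht y : ℕ) : ℕ∞) := by
              simp only [ht]
              rw [ENat.coe_toNat (htfin y)]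
          _ < ((ht a + 1 : ℕ) : ℕ∞) := by exact_mod_cast Nat.lt_succ_of_le hyle
      have := ENat.toNat_le_toNat key (ENat.coe_ne_top _)
      rw [ENat.toNat_coe] at this
      exact this
    omega

/-- In a finite lower semimodular lattice, a family satisfying (B1) and (B2) has all
elements of the same height. -/
theorem bases_same_height {α : Type*} [Lattice α] [Fintype α] [BoundedOrder α]
    (hLSM : ∀ X Y : α, X ⋖ X ⊔ Y → X ⊓ Y ⋖ Y)
    (𝓑 : Set α)
    (hB1 : ∀ B₁ B₂, B₁ ∈ 𝓑 → B₂ ∈ 𝓑 → B₁ ≤ B₂ → B₁ = B₂)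
    (hB2 : ∀ B₁ B₂ X Y, B₁ ∈ 𝓑 → B₂ ∈ 𝓑 → X ≤ B₁ → B₂ ≤ Y →
        ∃ B ∈ 𝓑, X ≤ B ∧ B ≤ Y) :
    ∀ B₁ B₂, B₁ ∈ 𝓑 → B₂ ∈ 𝓑 → ht B₁ = ht B₂ := by
  have key : ∀ n : ℕ, ∀ B₁ B₂, B₁ ∈ 𝓑 → B₂ ∈ 𝓑 → ht (B₁ ⊔ B₂) = n → ht B₁ = ht B₂ := by
    intro n
    induction n using Nat.strong_induction_on with
    | _ n IH =>
      have step : ∀ B₁ B₂, B₁ ∈ 𝓑 → B₂ ∈ 𝓑 → ht (B₁ ⊔ B₂) = n → ht B₂ ≤ ht B₁ := by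
        intro B₁ B₂ h1 h2 hn
        by_cases heq : B₁ = B₂
        · subst heq; exact le_refl _
        have hne : ¬ B₂ ≤ B₁ := fun h => heq (hB1 B₂ B₁ h2 h1 h).symm
        have hlt : B₁ < B₁ ⊔ B₂ := lt_of_le_of_ne le_sup_left
          (fun h => hne (h ▸ le_sup_right))
        obtain ⟨X, hBX, hX⟩ := exists_le_covBy_of_lt hlt
        have hB2X : ¬ B₂ ≤ X := fun h =>
          hX.lt.ne (le_antisymm hX.lt.le (sup_le hBX h))
        have hsup : X ⊔ B₂ = B₁ ⊔ B₂ := by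
          have hle : X ⊔ B₂ ≤ B₁ ⊔ B₂ := sup_le hX.lt.le le_sup_right
          have hlt2 : X < X ⊔ B₂ := lt_of_le_of_ne le_sup_left
            (fun h => hB2X (h ▸ le_sup_right))
          rcases hle.lt_or_eq with h | h
          · exact absurd h (hX.2 hlt2)
          · exact h
        have hcov : X ⊓ B₂ ⋖ B₂ := hLSM X B₂ (by rw [hsup]; exact hX)
        obtain ⟨B, hB, hXB, hBX'⟩ := hB2 B₂ B₁ (X ⊓ B₂) X h2 h1 inf_le_right hBX
        have hBneB₂ : B ≠ B₂ := fun h => hB2X (h ▸ hBX')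
        have hinfeq : B ⊓ B₂ = X ⊓ B₂ :=
          le_antisymm (le_inf (inf_le_left.trans hBX') inf_le_right)
            (le_inf hXB inf_le_right)
        have hinfcov : B ⊓ B₂ ⋖ B₂ := hinfeq ▸ hcov
        have hinflt : B ⊓ B₂ < B := lt_of_le_of_ne inf_le_left
          (fun h => hBneB₂ (hB1 B B₂ hB h2 (h ▸ inf_le_right)))
        have hge : ht B₂ ≤ ht B := by
          have e1 := ht_covBy_s8 hLSM hinfcov
          have e2 := ht_lt hinflt
          omega
        have hlt3 : ht (B₁ ⊔ B) < n :=
          hn ▸ ht_lt (lt_of_le_of_lt (sup_le hBX hBX') hX.lt)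
        have := IH _ hlt3 B₁ B h1 hB rfl
        omega
      intro B₁ B₂ h1 h2 hn
      have a1 := step B₁ B₂ h1 h2 hn
      have a2 := step B₂ B₁ h2 h1 (by rw [sup_comm]; exact hn)
      omega
  intro B₁ B₂ h1 h2
  exact key _ B₁ B₂ h1 h2 rfl
end
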